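/- Let K be a field of characteristic 0 and n ≥ 2. For every nonzero α = (α_1,…,α_{n−1}) ∈ K^{n−1}, the polynomial w_α = (α_1x_1+⋯+α_{n−1}x_{n−1})y_n − (α_1y_1+⋯+α_{n−1}y_{n−1})x_n is irreducible in the polynomial ring K[x_1,…,x_n,y_1,…,y_n]. -/

import Mathlib

open MvPolynomial

section AuxSplit

noncomputable def splitVar (K : Type*) [CommSemiring K] {σ : Type*} [DecidableEq σ] (t : σ) :
    MvPolynomial σ K ≃ₐ[K] Polynomial (MvPolynomial {s : σ // s ≠ t} K) :=
  (renameEquiv K (Equiv.optionSubtypeNe t).symm).trans (optionEquivLeft K _)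

lemma splitVar_X_self (K : Type*) [CommSemiring K] {σ : Type*} [DecidableEq σ] (t : σ) :
    splitVar K t (X t) = Polynomial.X := by
  simp [splitVar, Equiv.optionSubtypeNe_symm_self, optionEquivLeft_X_none]

lemma splitVar_X_ne (K : Type*) [CommSemiring K] {σ : Type*} [DecidableEq σ] {t s : σ}
    (h : s ≠ t) : splitVar K t (X s) = Polynomial.C (X ⟨s, h⟩) := by
  simp [splitVar, Equiv.optionSubtypeNe_symm_of_ne h, optionEquivLeft_X_some]

lemma splitVar_C (K : Type*) [CommSemiring K] {σ : Type*} [DecidableEq σ] (t : σ) (a : K) :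
    splitVar K t (C a) = Polynomial.C (C a) := by
  simp [splitVar, rename_C, optionEquivLeft_C]

lemma irreducible_C_mul_X_add_C {R : Type*} [CommRing R] [IsDomain R] {c1 c0 : R}
    (h : IsUnit c1) :
    Irreducible (Polynomial.C c1 * Polynomial.X + Polynomial.C c0) := by
  obtain ⟨u, rfl⟩ := h
  have key : Polynomial.C (u : R) * Polynomial.X + Polynomial.C c0 =
      (Polynomial.X - Polynomial.C (-((u⁻¹ : Rˣ) * c0))) * Polynomial.C (u : R) := by
    have hc : (-((u⁻¹ : Rˣ) * c0) : R) * u = -c0 := by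
      rw [neg_mul, mul_comm ((u⁻¹ : Rˣ) : R) c0, mul_assoc, Units.inv_mul, mul_one]
    rw [sub_mul, ← Polynomial.C_mul, hc, Polynomial.C_neg, sub_neg_eq_add,
      mul_comm Polynomial.X]
  rw [key]
  exact (associated_mul_unit_left _ _ ((Polynomial.isUnit_C).mpr u.isUnit)).symm.irreducible
    (Polynomial.prime_X_sub_C _).irreducible

lemma coeff_linComb {K : Type*} [CommSemiring K] {σ : Type*} [DecidableEq σ] {r : ℕ}
    {v : Fin r → σ} (hv : Function.Injective v) (α : Fin r → K) (i : Fin r) :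
    coeff (Finsupp.single (v i) 1) (∑ j, C (α j) * X (v j)) = α i := by
  rw [coeff_sum, Finset.sum_eq_single i]
  · simp [coeff_C_mul, coeff_X']
  · intro j _ hj
    simp only [coeff_C_mul, coeff_X']
    rw [if_neg, mul_zero]
    intro hsingle
    exact hj (hv ((Finsupp.single_left_inj (one_ne_zero)).mp hsingle))
  · simp

lemma linComb_ne_zero {K : Type*} [CommSemiring K] [Nontrivial K] {σ : Type*} [DecidableEq σ]
    {r : ℕ} {v : Fin r → σ} (hv : Function.Injective v) {α : Fin r → K} {i : Fin r}
    (hαi : α i ≠ 0) : (∑ j, C (α j) * X (v j) : MvPolynomial σ K) ≠ 0 := by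
  intro h0
  apply hαi
  rw [← coeff_linComb hv α i, h0, coeff_zero]

lemma irreducible_linComb {K : Type*} [Field K] {σ : Type*} [DecidableEq σ] {r : ℕ}
    {v : Fin r → σ} (hv : Function.Injective v) {α : Fin r → K} {i : Fin r}
    (hαi : α i ≠ 0) :
    Irreducible (∑ j, C (α j) * X (v j) : MvPolynomial σ K) := by
  set t := v i with ht
  have key : splitVar K t (∑ j, C (α j) * X (v j)) =
      Polynomial.C (C (α i)) * Polynomial.X +
        Polynomial.C (∑ j ∈ Finset.univ.erase i,
          C (α j) * (if h : v j = t then 0 else X (⟨v j, h⟩ : {s // s ≠ t}))) := by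
    rw [map_sum, ← Finset.sum_erase_add _ _ (Finset.mem_univ i), add_comm]
    congr 1
    · rw [map_mul, splitVar_C, splitVar_X_self]
    · rw [map_sum Polynomial.C]
      apply Finset.sum_congr rfl
      intro j hj
      have hne : v j ≠ t := fun h => (Finset.ne_of_mem_erase hj) (hv h)
      rw [dif_neg hne, map_mul, splitVar_C, splitVar_X_ne K hne, ← map_mul]
  have hu : IsUnit (C (α i) : MvPolynomial {s // s ≠ t} K) :=
    IsUnit.of_mul_eq_one (C ((α i)⁻¹)) (by rw [← C_mul, mul_inv_cancel₀ hαi, C_1])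
  have hirr2 : Irreducible (splitVar K t (∑ j, C (α j) * X (v j))) := by
    rw [key]; exact irreducible_C_mul_X_add_C hu
  exact (MulEquiv.irreducible_iff (splitVar K t)).mp hirr2

end AuxSplit

/-- The polynomial `w_α = (Σ_{i=1}^{r} α_i x_i) y_{r+1} - (Σ_{i=1}^{r} α_i y_i) x_{r+1}`
in `K[x_1,…,x_{r+1},y_1,…,y_{r+1}]`, where `x_i = X (Sum.inl i)`, `y_i = X (Sum.inr i)`. -/
noncomputable def wAlpha (K : Type*) [CommRing K] (r : ℕ) (α : Fin r → K) :
    MvPolynomial (Fin (r + 1) ⊕ Fin (r + 1)) K :=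
  (∑ j : Fin r, C (α j) * X (Sum.inl j.castSucc)) * X (Sum.inr (Fin.last r)) -
    (∑ j : Fin r, C (α j) * X (Sum.inr j.castSucc)) * X (Sum.inl (Fin.last r))

/-- For `n = m + 2 ≥ 2` and every nonzero `α ∈ K^{n-1}`, the polynomial `w_α` is
irreducible in `K[x_1,…,x_n,y_1,…,y_n]`. -/
theorem wAlpha_irreducible {K : Type*} [Field K] [CharZero K] (m : ℕ)
    (α : Fin (m + 1) → K) (hα : α ≠ 0) :
    Irreducible (wAlpha K (m + 1) α) := by
  classical
  obtain ⟨i, hαi⟩ : ∃ i, α i ≠ 0 := Function.ne_iff.mp hα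
  set t : Fin (m + 2) ⊕ Fin (m + 2) := Sum.inr (Fin.last (m + 1)) with htdef
  let S₀ := {s : Fin (m + 2) ⊕ Fin (m + 2) // s ≠ t}
  let vA : Fin (m + 1) → S₀ := fun j => ⟨Sum.inl j.castSucc, by simp [htdef]⟩
  let vB : Fin (m + 1) → S₀ := fun j =>
    ⟨Sum.inr j.castSucc, fun h => (Fin.castSucc_lt_last j).ne (Sum.inr.inj h)⟩
  let xnv : S₀ := ⟨Sum.inl (Fin.last (m + 1)), by simp [htdef]⟩
  have hvA : Function.Injective vA := fun a b h =>
    Fin.castSucc_injective _ (Sum.inl.inj (Subtype.ext_iff.mp h))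
  have hvB : Function.Injective vB := fun a b h =>
    Fin.castSucc_injective _ (Sum.inr.inj (Subtype.ext_iff.mp h))
  set A : MvPolynomial S₀ K := ∑ j, C (α j) * X (vA j) with hAdef
  set B : MvPolynomial S₀ K := ∑ j, C (α j) * X (vB j) with hBdef
  set xn : MvPolynomial S₀ K := X xnv with hxndef
  -- the image of wAlpha under splitVar
  have hA' : splitVar K t (∑ j, C (α j) * X (Sum.inl j.castSucc)) = Polynomial.C A := by
    rw [hAdef, map_sum, map_sum Polynomial.C]
    refine Finset.sum_congr rfl fun j _ => ?_
    rw [map_mul, splitVar_C, splitVar_X_ne K (vA j).2, ← map_mul]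
  have hB' : splitVar K t (∑ j, C (α j) * X (Sum.inr j.castSucc)) = Polynomial.C B := by
    rw [hBdef, map_sum, map_sum Polynomial.C]
    refine Finset.sum_congr rfl fun j _ => ?_
    rw [map_mul, splitVar_C, splitVar_X_ne K (vB j).2, ← map_mul]
  have key : splitVar K t (wAlpha K (m + 1) α) =
      Polynomial.C A * Polynomial.X - Polynomial.C (B * xn) := by
    rw [wAlpha, map_sub, map_mul, map_mul, hA', hB', splitVar_X_self,
      splitVar_X_ne K xnv.2, ← map_mul Polynomial.C]
  have hA : Irreducible A := irreducible_linComb hvA hαi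
  -- A does not divide B * xn
  have hndvd : ¬ A ∣ B * xn := by
    intro hdvd
    let g : S₀ → MvPolynomial S₀ K := fun s =>
      Sum.elim (fun k => if k = Fin.last (m + 1) then X s else 0) (fun _ => X s) s.1
    have hgA : aeval g A = 0 := by
      rw [hAdef, map_sum]
      refine Finset.sum_eq_zero fun j _ => ?_
      have hne : (j.castSucc : Fin (m + 2)) ≠ Fin.last (m + 1) := (Fin.castSucc_lt_last j).ne
      rw [map_mul, aeval_X]
      simp [g, vA, hne]
    have hgB : aeval g B = B := by
      rw [hBdef, map_sum]
      refine Finset.sum_congr rfl fun j _ => ?_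
      rw [map_mul, aeval_X]
      simp [g, vB, aeval_C, algebraMap_eq]
    have hgxn : aeval g xn = xn := by
      rw [hxndef, aeval_X]
      simp [g, xnv]
    have h2 : aeval g A ∣ aeval g (B * xn) := map_dvd _ hdvd
    rw [hgA, map_mul, hgB, hgxn, zero_dvd_iff] at h2
    exact mul_ne_zero (linComb_ne_zero hvB hαi) (X_ne_zero _) h2
  -- primitivity
  set p : Polynomial (MvPolynomial S₀ K) :=
    Polynomial.C A * Polynomial.X - Polynomial.C (B * xn) with hpdef
  have hprim : p.IsPrimitive := by
    intro c hc
    rw [Polynomial.C_dvd_iff_dvd_coeff] at hc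
    have h1 : c ∣ A := by simpa [hpdef] using hc 1
    have h0 : c ∣ B * xn := by
      have := hc 0
      simp only [hpdef, Polynomial.coeff_sub, Polynomial.coeff_C_mul, Polynomial.coeff_X_zero,
        mul_zero, Polynomial.coeff_C, if_pos rfl, zero_sub, dvd_neg] at this
      exact this
    obtain ⟨e, he⟩ := h1
    rcases hA.isUnit_or_isUnit he with h | h
    · exact h
    · exfalso
      apply hndvd
      obtain ⟨eu, rfl⟩ := h
      have hAc : A ∣ c := ⟨(eu⁻¹ : _), by rw [he, mul_assoc, Units.mul_inv, mul_one]⟩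
      exact dvd_trans hAc h0
  -- irreducibility of p over the fraction field
  have hpirr : Irreducible p := by
    refine hprim.irreducible_of_irreducible_map_of_injective
      (IsFractionRing.injective (MvPolynomial S₀ K) (FractionRing (MvPolynomial S₀ K))) ?_
    rw [hpdef, Polynomial.map_sub, Polynomial.map_mul, Polynomial.map_C, Polynomial.map_X,
      Polynomial.map_C, sub_eq_add_neg, ← Polynomial.C_neg]
    refine Polynomial.irreducible_of_degree_eq_one (Polynomial.degree_linear ?_)
    exact (map_ne_zero_iff _
      (IsFractionRing.injective (MvPolynomial S₀ K) (FractionRing (MvPolynomial S₀ K)))).mpr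
      hA.ne_zero
  have hfinal : Irreducible (splitVar K t (wAlpha K (m + 1) α)) := key ▸ hpirr
  exact (MulEquiv.irreducible_iff (splitVar K t)).mp hfinal
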